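/- Let X be a Banach lattice and 0 < ε < 1. If x ∈ X satisfies x ≥ 0 and ‖x‖ = 1, and x* is a positive continuous linear functional on X with ‖x*‖ = 1 such that x*(x) > 1 − ε²/2, then there exist y ∈ X with y ≥ 0 and ‖y‖ = 1, and a positive continuous linear functional y* on X with ‖y*‖ = 1, such that y*(y) = 1, ‖y − x‖ < ε and ‖y* − x*‖ < ε. -/

import Mathlib

open Filter Topology

/-- Ekeland-type variational principle for a continuous nonnegative function on a
complete metric space. -/
theorem my_ekeland {E : Type*} [MetricSpace E] [CompleteSpace E]
    (h : E → ℝ) (hc : Continuous h) (hnn : ∀ z, 0 ≤ h z)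
    (x : E) (lam : ℝ) (hlam : 0 < lam) :
    ∃ y, h y ≤ h x ∧ lam * dist x y ≤ h x - h y ∧ ∀ z, h y ≤ h z + lam * dist z y := by
  have hSne : ∀ w : E, w ∈ {z | h z + lam * dist z w ≤ h w} := by
    intro w; simp [Set.mem_setOf_eq]
  have hbdd : ∀ w : E, BddBelow (h '' {z | h z + lam * dist z w ≤ h w}) := by
    intro w; exact ⟨0, by rintro r ⟨z, _, rfl⟩; exact hnn z⟩
  have hchoice : ∀ (n : ℕ) (w : E), ∃ z, (h z + lam * dist z w ≤ h w) ∧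
      h z < sInf (h '' {z | h z + lam * dist z w ≤ h w}) + (1/2) ^ n := by
    intro n w
    obtain ⟨r, ⟨z, hz, rfl⟩, hlt⟩ := Real.lt_sInf_add_pos
      ((Set.Nonempty.image h ⟨w, hSne w⟩)) (by positivity : (0:ℝ) < (1/2) ^ n)
    exact ⟨z, hz, hlt⟩
  choose nxt hn1 hn2 using hchoice
  let u : ℕ → E := fun n => Nat.rec x (fun n w => nxt n w) n
  have hu0 : u 0 = x := rfl
  have hus : ∀ n, u (n + 1) = nxt n (u n) := fun n => rfl
  have step : ∀ n, h (u (n + 1)) + lam * dist (u (n + 1)) (u n) ≤ h (u n) := fun n => hn1 n (u n)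
  have anti : ∀ n, h (u (n + 1)) ≤ h (u n) := by
    intro n
    have := step n
    nlinarith [dist_nonneg (x := u (n+1)) (y := u n), hlam]
  have hanti : Antitone fun n => h (u n) := antitone_nat_of_succ_le anti
  have tele : ∀ n m, n ≤ m → lam * dist (u n) (u m) ≤ h (u n) - h (u m) := by
    intro n m hnm
    induction m, hnm using Nat.le_induction with
    | base => simp
    | succ m hnm ih =>
      have h1 := step m
      have h2 : dist (u n) (u (m+1)) ≤ dist (u n) (u m) + dist (u (m+1)) (u m) := by
        rw [dist_comm (u (m+1)) (u m)]; exact dist_triangle _ _ _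
      nlinarith [hlam]
  have hbr : BddBelow (Set.range fun n => h (u n)) := ⟨0, by rintro r ⟨n, rfl⟩; exact hnn _⟩
  set L : ℝ := ⨅ n, h (u n) with hL
  have hLtend : Tendsto (fun n => h (u n)) atTop (𝓝 L) := tendsto_atTop_ciInf hanti hbr
  have hLle : ∀ n, L ≤ h (u n) := fun n => ciInf_le hbr n
  have hcauchy : CauchySeq u := by
    apply cauchySeq_of_le_tendsto_0 (fun N => (h (u N) - L) / lam)
    · intro n m N hNn hNm
      wlog hnm : n ≤ m generalizing n m
      · rw [dist_comm]; exact this m n hNm hNn (le_of_not_ge hnm)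
      have := tele n m hnm
      have h1 : h (u n) ≤ h (u N) := hanti hNn
      have h2 : L ≤ h (u m) := hLle m
      rw [le_div_iff₀ hlam]
      nlinarith
    · have : Tendsto (fun N => (h (u N) - L) / lam) atTop (𝓝 ((L - L) / lam)) :=
        ((hLtend.sub tendsto_const_nhds).div_const lam)
      simpa using this
  obtain ⟨y, hy⟩ := cauchySeq_tendsto_of_complete hcauchy
  have hhy : Tendsto (fun n => h (u n)) atTop (𝓝 (h y)) := (hc.tendsto y).comp hy
  have hLy : L = h y := tendsto_nhds_unique hLtend hhy
  have dist_le : ∀ n, lam * dist (u n) y ≤ h (u n) - h y := by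
    intro n
    have h1 : Tendsto (fun m => lam * dist (u n) (u m)) atTop (𝓝 (lam * dist (u n) y)) :=
      (tendsto_const_nhds.dist hy).const_mul lam
    refine le_of_tendsto h1 ?_
    filter_upwards [eventually_ge_atTop n] with m hm
    have := tele n m hm
    have h2 : L ≤ h (u m) := hLle m
    rw [← hLy]; linarith
  have hyx : h y ≤ h x := by rw [← hLy, ← hu0]; exact hLle 0
  refine ⟨y, hyx, by simpa [hu0] using dist_le 0, ?_⟩
  by_contra hcon
  push_neg at hcon
  obtain ⟨z, hz⟩ := hcon
  have hzmem : ∀ n, h z + lam * dist z (u n) ≤ h (u n) := by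
    intro n
    have h1 : dist z (u n) ≤ dist z y + dist y (u n) := dist_triangle _ _ _
    have h2 : lam * dist y (u n) ≤ h (u n) - h y := by
      rw [dist_comm]; exact dist_le n
    nlinarith [hlam]
  have hinf : ∀ n, sInf (h '' {w | h w + lam * dist w (u n) ≤ h (u n)}) ≤ h z := fun n =>
    csInf_le (hbdd (u n)) ⟨z, hzmem n, rfl⟩
  have hlt : ∀ n, h (u (n + 1)) < h z + (1/2) ^ n := by
    intro n
    have := hn2 n (u n)
    rw [← hus n] at this
    exact lt_of_lt_of_le this (by linarith [hinf n])
  have hyz : h y ≤ h z := by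
    have h1 : Tendsto (fun n => h (u (n + 1))) atTop (𝓝 (h y)) :=
      hhy.comp (tendsto_add_atTop_nat 1)
    have h2 : Tendsto (fun n : ℕ => h z + (1/2 : ℝ) ^ n) atTop (𝓝 (h z + 0)) :=
      tendsto_const_nhds.add (tendsto_pow_atTop_nhds_zero_of_lt_one (by norm_num) (by norm_num))
    rw [show h z = h z + 0 from (add_zero _).symm]
    exact le_of_tendsto_of_tendsto' h1 h2 fun n => (hlt n).le
  nlinarith [dist_nonneg (x := z) (y := y), hlam]

/-- Hahn–Banach step in the Bishop–Phelps–Bollobás construction. -/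
theorem my_hb {X : Type*} [NormedAddCommGroup X] [NormedSpace ℝ X]
    (f : X →L[ℝ] ℝ) (hfb : ∀ z, f z ≤ ‖z‖) (y : X) (hy : y ≠ 0) (lam : ℝ) (hlam : 0 < lam)
    (key : ∀ z, ‖y‖ - f y ≤ ‖z‖ - f z + lam * ‖z - y‖) :
    ∃ g : X →L[ℝ] ℝ, (∀ z, |g z| ≤ ‖z‖) ∧ g y = ‖y‖ ∧ ∀ z, |g z - f z| ≤ lam * ‖z‖ := by
  set S : X → Set ℝ := fun w => {r | ∃ z, r = ‖z‖ + f (w - z) + lam * ‖w - z‖} with hS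
  set p : X → ℝ := fun w => sInf (S w) with hp
  have hne : ∀ w, (S w).Nonempty := fun w => ⟨‖w‖ + f (w - w) + lam * ‖w - w‖, w, rfl⟩
  have hlb : ∀ w, ∀ r ∈ S w, f w ≤ r := by
    rintro w r ⟨z, rfl⟩
    have h1 : f w = f z + f (w - z) := by rw [← map_add]; congr 1; abel
    have h2 := hfb z
    nlinarith [norm_nonneg (w - z), hlam]
  have hbdd : ∀ w, BddBelow (S w) := fun w => ⟨f w, hlb w⟩
  have hple : ∀ w z, p w ≤ ‖z‖ + f (w - z) + lam * ‖w - z‖ := fun w z =>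
    csInf_le (hbdd w) ⟨z, rfl⟩
  have hfp : ∀ w, f w ≤ p w := fun w => le_csInf (hne w) (hlb w)
  have hp_norm : ∀ w, p w ≤ ‖w‖ := by
    intro w; have := hple w w; simpa using this
  have hp_f : ∀ w, p w ≤ f w + lam * ‖w‖ := by
    intro w; have := hple w 0; simpa using this
  have N_add : ∀ w w', p (w + w') ≤ p w + p w' := by
    intro w w'
    have H : ∀ z z', p (w + w') ≤ (‖z‖ + f (w - z) + lam * ‖w - z‖) +
        (‖z'‖ + f (w' - z') + lam * ‖w' - z'‖) := by
      intro z z'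
      refine (hple (w + w') (z + z')).trans ?_
      have e1 : w + w' - (z + z') = (w - z) + (w' - z') := by abel
      have h1 : ‖z + z'‖ ≤ ‖z‖ + ‖z'‖ := norm_add_le _ _
      have h2 : f (w + w' - (z + z')) = f (w - z) + f (w' - z') := by rw [e1, map_add]
      have h3 : ‖w + w' - (z + z')‖ ≤ ‖w - z‖ + ‖w' - z'‖ := by
        rw [e1]; exact norm_add_le _ _
      nlinarith [hlam]
    have H2 : ∀ r ∈ S w, p (w + w') - r ≤ p w' := by
      rintro r ⟨z, rfl⟩
      refine le_csInf (hne w') ?_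
      rintro r' ⟨z', rfl⟩
      linarith [H z z']
    have : p (w + w') - p w' ≤ p w := by
      refine le_csInf (hne w) fun r hr => ?_
      linarith [H2 r hr]
    linarith
  have N_hom_le : ∀ c : ℝ, 0 < c → ∀ w, p (c • w) ≤ c * p w := by
    intro c hc w
    have key2 : ∀ r ∈ S w, p (c • w) ≤ c * r := by
      rintro r ⟨z, rfl⟩
      have : p (c • w) ≤ ‖c • z‖ + f (c • w - c • z) + lam * ‖c • w - c • z‖ := hple _ _
      have e1 : c • w - c • z = c • (w - z) := by rw [smul_sub]
      rw [e1, norm_smul, norm_smul, map_smul] at this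
      simp only [Real.norm_eq_abs, abs_of_pos hc, smul_eq_mul] at this
      calc p (c • w) ≤ c * ‖z‖ + c * f (w - z) + lam * (c * ‖w - z‖) := this
        _ = c * (‖z‖ + f (w - z) + lam * ‖w - z‖) := by ring
    have : p (c • w) / c ≤ p w := by
      refine le_csInf (hne w) fun r hr => ?_
      rw [div_le_iff₀ hc]
      calc p (c • w) ≤ c * r := key2 r hr
        _ = r * c := mul_comm _ _
    calc p (c • w) = (p (c • w) / c) * c := by field_simp
      _ ≤ p w * c := by nlinarith
      _ = c * p w := mul_comm _ _
  have N_hom : ∀ c : ℝ, 0 < c → ∀ w, p (c • w) = c * p w := by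
    intro c hc w
    refine le_antisymm (N_hom_le c hc w) ?_
    have := N_hom_le c⁻¹ (by positivity) (c • w)
    rw [smul_smul, inv_mul_cancel₀ (ne_of_gt hc), one_smul] at this
    calc c * p w ≤ c * (c⁻¹ * p (c • w)) := by nlinarith
      _ = p (c • w) := by field_simp
  have hpy : ‖y‖ ≤ p y := by
    refine le_csInf (hne y) ?_
    rintro r ⟨z, rfl⟩
    have h1 := key z
    have h2 : f (y - z) = f y - f z := by rw [map_sub]
    rw [norm_sub_rev z y] at h1
    linarith
  set pm : X →ₗ.[ℝ] ℝ := LinearPMap.mkSpanSingleton y (‖y‖ : ℝ) hy with hpm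
  have hfle : ∀ v : pm.domain, pm v ≤ p v := by
    rintro ⟨v, hv⟩
    obtain ⟨c, rfl⟩ := Submodule.mem_span_singleton.1 hv
    have happ : pm ⟨c • y, hv⟩ = c • (‖y‖ : ℝ) :=
      LinearPMap.mkSpanSingleton'_apply _ _ _ c _
    rw [happ]
    simp only [smul_eq_mul]
    rcases le_or_gt c 0 with hc | hc
    · have h1 : c * ‖y‖ ≤ c * f y := mul_le_mul_of_nonpos_left (hfb y) hc
      have h2 : f (c • y) ≤ p (c • y) := hfp _
      rw [map_smul, smul_eq_mul] at h2
      exact h1.trans h2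
    · rw [N_hom c hc y]
      nlinarith [hpy]
  obtain ⟨g, hg1, hg2⟩ := exists_extension_of_le_sublinear pm p N_hom N_add hfle
  have hgy : g y = ‖y‖ := by
    have h0 := hg1 ⟨y, Submodule.mem_span_singleton_self y⟩
    have h1 : pm ⟨y, Submodule.mem_span_singleton_self y⟩ = ‖y‖ :=
      LinearPMap.mkSpanSingleton_apply ℝ ℝ hy ‖y‖
    exact h0.trans h1
  have hb1 : ∀ z, |g z| ≤ ‖z‖ := by
    intro z
    rw [abs_le]
    constructor
    · have := (hg2 (-z)).trans (hp_norm (-z))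
      rw [map_neg, norm_neg] at this; linarith
    · exact (hg2 z).trans (hp_norm z)
  have hb2 : ∀ z, |g z - f z| ≤ lam * ‖z‖ := by
    intro z
    rw [abs_le]
    constructor
    · have := (hg2 (-z)).trans (hp_f (-z))
      rw [map_neg, map_neg, norm_neg] at this; linarith
    · have := (hg2 z).trans (hp_f z); linarith
  refine ⟨LinearMap.mkContinuous g 1 (fun z => by simpa using hb1 z), hb1, hgy, hb2⟩

/-- Riesz decomposition in a lattice-ordered group. -/
theorem my_riesz {X : Type*} [Lattice X] [AddCommGroup X]
    [CovariantClass X X (· + ·) (· ≤ ·)] {z w u : X} (hz : 0 ≤ z) (hw : 0 ≤ w) (hu : |u| ≤ z + w) :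
    ∃ u₁ u₂, u = u₁ + u₂ ∧ |u₁| ≤ z ∧ |u₂| ≤ w := by
  have hup : u ≤ z + w := (le_abs_self u).trans hu
  have hun : -(z + w) ≤ u := neg_le.mpr ((neg_le_abs u).trans hu)
  refine ⟨(u ⊓ z) ⊔ -z, u - ((u ⊓ z) ⊔ -z), by abel, ?_, ?_⟩
  · rw [abs_le']
    refine ⟨sup_le inf_le_right ((neg_nonpos.2 hz).trans hz), ?_⟩
    rw [neg_le]
    exact le_sup_right
  · rw [abs_le']
    constructor
    · have h1 : u - ((u ⊓ z) ⊔ -z) ≤ u - (u ⊓ z) := sub_le_sub_left le_sup_left _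
      refine h1.trans ?_
      rw [sub_inf]
      refine sup_le (by simp [hw]) ?_
      exact sub_le_iff_le_add.2 (hup.trans_eq (add_comm z w))
    · rw [neg_sub, sup_sub]
      refine sup_le ((sub_nonpos.2 inf_le_left).trans hw) ?_
      have h2 : -z - w ≤ u := by
        refine le_trans (le_of_eq ?_) hun
        abel
      have h3 : -z ≤ u + w := sub_le_iff_le_add.1 h2
      exact sub_le_iff_le_add.2 (h3.trans_eq (add_comm u w))

section Modulus

variable {X : Type*} [NormedAddCommGroup X] [Lattice X] [HasSolidNorm X]
    [IsOrderedAddMonoid X] [NormedSpace ℝ X]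

/-- The modulus of a continuous linear functional on a Banach lattice, together with its
key properties. -/
theorem my_modulus (g f : X →L[ℝ] ℝ) (hfpos : ∀ z : X, 0 ≤ z → 0 ≤ f z) :
    ∃ G : X →L[ℝ] ℝ, (∀ z : X, 0 ≤ z → 0 ≤ G z) ∧ ‖G‖ ≤ ‖g‖ ∧
      (∀ z : X, 0 ≤ z → ∀ u : X, |u| ≤ z → g u ≤ G z) ∧ ‖G - f‖ ≤ ‖g - f‖ := by
  classical
  -- the sup function on the positive cone, for an arbitrary functional c
  set T : (X →L[ℝ] ℝ) → X → ℝ := fun c z => sSup ((fun u => c u) '' {u | |u| ≤ z}) with hT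
  have hmem0 : ∀ (c : X →L[ℝ] ℝ) (z : X), 0 ≤ z → (0:ℝ) ∈ (fun u => c u) '' {u | |u| ≤ z} := by
    intro c z hz
    exact ⟨0, by simpa using hz, by simp⟩
  have hne : ∀ (c : X →L[ℝ] ℝ) (z : X), 0 ≤ z → ((fun u => c u) '' {u | |u| ≤ z}).Nonempty :=
    fun c z hz => ⟨0, hmem0 c z hz⟩
  have hub : ∀ (c : X →L[ℝ] ℝ) (z : X), 0 ≤ z → ∀ r ∈ (fun u => c u) '' {u | |u| ≤ z},
      r ≤ ‖c‖ * ‖z‖ := by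
    rintro c z hz r ⟨u, hu, rfl⟩
    have h1 : ‖u‖ ≤ ‖z‖ := by
      have : |u| ≤ |z| := le_trans hu (le_of_eq (abs_of_nonneg hz).symm)
      exact HasSolidNorm.solid this
    calc c u ≤ ‖c u‖ := le_abs_self _
      _ ≤ ‖c‖ * ‖u‖ := c.le_opNorm u
      _ ≤ ‖c‖ * ‖z‖ := by nlinarith [norm_nonneg c]
  have hbdd : ∀ (c : X →L[ℝ] ℝ) (z : X), 0 ≤ z → BddAbove ((fun u => c u) '' {u | |u| ≤ z}) :=
    fun c z hz => ⟨‖c‖ * ‖z‖, hub c z hz⟩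
  have T_ge : ∀ (c : X →L[ℝ] ℝ) (z : X), 0 ≤ z → ∀ u : X, |u| ≤ z → c u ≤ T c z :=
    fun c z hz u hu => le_csSup (hbdd c z hz) ⟨u, hu, rfl⟩
  have T_nonneg : ∀ (c : X →L[ℝ] ℝ) (z : X), 0 ≤ z → 0 ≤ T c z :=
    fun c z hz => le_csSup (hbdd c z hz) (hmem0 c z hz)
  have T_le : ∀ (c : X →L[ℝ] ℝ) (z : X), 0 ≤ z → T c z ≤ ‖c‖ * ‖z‖ :=
    fun c z hz => csSup_le (hne c z hz) (hub c z hz)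
  have T_add : ∀ (c : X →L[ℝ] ℝ) (z w : X), 0 ≤ z → 0 ≤ w →
      T c (z + w) = T c z + T c w := by
    intro c z w hz hw
    have hzw : 0 ≤ z + w := add_nonneg hz hw
    refine le_antisymm ?_ ?_
    · refine csSup_le (hne c _ hzw) ?_
      rintro r ⟨u, hu, rfl⟩
      obtain ⟨u₁, u₂, rfl, h1, h2⟩ := my_riesz hz hw hu
      show c (u₁ + u₂) ≤ T c z + T c w
      rw [map_add]
      exact add_le_add (T_ge c z hz u₁ h1) (T_ge c w hw u₂ h2)
    · have key : ∀ u₁ : X, |u₁| ≤ z → ∀ u₂ : X, |u₂| ≤ w → c u₁ + c u₂ ≤ T c (z + w) := by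
        intro u₁ h1 u₂ h2
        rw [← map_add]
        refine T_ge c _ hzw _ ?_
        exact le_trans (abs_add_le _ _) (add_le_add h1 h2)
      have h3 : T c z ≤ T c (z + w) - T c w := by
        refine csSup_le (hne c z hz) ?_
        rintro r ⟨u₁, h1, rfl⟩
        rw [le_sub_iff_add_le]
        have h4 : T c w ≤ T c (z + w) - c u₁ := by
          refine csSup_le (hne c w hw) ?_
          rintro r' ⟨u₂, h2, rfl⟩
          linarith [key u₁ h1 u₂ h2]
        linarith
      linarith
  -- the extension of T g to an additive map
  set G0 : X → ℝ := fun v => T g v⁺ - T g v⁻ with hG0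
  have Tdiff : ∀ a b : X, 0 ≤ a → 0 ≤ b → G0 (a - b) = T g a - T g b := by
    intro a b ha hb
    have e : (a - b)⁺ + b = (a - b)⁻ + a := by
      have h1 := posPart_sub_negPart (a - b)
      rw [sub_eq_sub_iff_add_eq_add] at h1
      rw [h1, add_comm]
    have h2 : T g ((a - b)⁺ + b) = T g ((a - b)⁻ + a) := by rw [e]
    rw [T_add g _ _ (posPart_nonneg _) hb, T_add g _ _ (negPart_nonneg _) ha] at h2
    simp only [hG0]
    linarith
  have G0add : ∀ v w : X, G0 (v + w) = G0 v + G0 w := by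
    intro v w
    have e : v + w = (v⁺ + w⁺) - (v⁻ + w⁻) := by
      rw [show (v⁺ + w⁺) - (v⁻ + w⁻) = (v⁺ - v⁻) + (w⁺ - w⁻) from by abel,
        posPart_sub_negPart, posPart_sub_negPart]
    rw [e, Tdiff _ _ (add_nonneg (posPart_nonneg _) (posPart_nonneg _))
      (add_nonneg (negPart_nonneg _) (negPart_nonneg _)),
      T_add g _ _ (posPart_nonneg _) (posPart_nonneg _),
      T_add g _ _ (negPart_nonneg _) (negPart_nonneg _)]
    simp only [hG0]
    ring
  have hposle : ∀ v : X, ‖v⁺‖ ≤ ‖v‖ := by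
    intro v
    refine HasSolidNorm.solid ?_
    rw [abs_of_nonneg (posPart_nonneg v)]
    rw [posPart_def]
    exact sup_le (le_abs_self v) (abs_nonneg v)
  have hnegle : ∀ v : X, ‖v⁻‖ ≤ ‖v‖ := by
    intro v
    refine HasSolidNorm.solid ?_
    rw [abs_of_nonneg (negPart_nonneg v), negPart_def]
    exact sup_le (neg_le_abs v) (abs_nonneg v)
  have G0bound : ∀ v : X, |G0 v| ≤ ‖g‖ * ‖v‖ := by
    intro v
    have h1 := T_le g v⁺ (posPart_nonneg v)
    have h2 := T_le g v⁻ (negPart_nonneg v)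
    have h3 := T_nonneg g v⁺ (posPart_nonneg v)
    have h4 := T_nonneg g v⁻ (negPart_nonneg v)
    have h5 : ‖g‖ * ‖v⁺‖ ≤ ‖g‖ * ‖v‖ := by nlinarith [norm_nonneg g, hposle v]
    have h6 : ‖g‖ * ‖v⁻‖ ≤ ‖g‖ * ‖v‖ := by nlinarith [norm_nonneg g, hnegle v]
    rw [abs_le]
    constructor <;> simp only [hG0] <;> linarith
  set Gm : X →+ ℝ := AddMonoidHom.mk' G0 G0add with hGm
  have Gcont : Continuous Gm := by
    refine (LipschitzWith.of_dist_le_mul (K := ‖g‖₊) ?_).continuous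
    intro a b
    have h1 : Gm a - Gm b = G0 (a - b) := by
      rw [← map_sub]
      rfl
    rw [Real.dist_eq, h1, dist_eq_norm]
    calc |G0 (a - b)| ≤ ‖g‖ * ‖a - b‖ := G0bound _
      _ = (‖g‖₊ : ℝ) * ‖a - b‖ := by rw [coe_nnnorm]
  set G : X →L[ℝ] ℝ := Gm.toRealLinearMap Gcont with hG
  have hGapp : ∀ v : X, G v = G0 v := fun v => rfl
  have hGposval : ∀ z : X, 0 ≤ z → G z = T g z := by
    intro z hz
    rw [hGapp]
    simp only [hG0]
    rw [posPart_eq_self.mpr hz, negPart_eq_zero.mpr hz]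
    have hT0 : T g 0 = 0 :=
      le_antisymm (by simpa using T_le g 0 le_rfl) (T_nonneg g 0 le_rfl)
    rw [hT0]; ring
  refine ⟨G, ?_, ?_, ?_, ?_⟩
  · intro z hz
    rw [hGposval z hz]
    exact T_nonneg g z hz
  · refine G.opNorm_le_bound (norm_nonneg g) fun v => ?_
    rw [hGapp]
    exact (Real.norm_eq_abs _) ▸ G0bound v
  · intro z hz u hu
    rw [hGposval z hz]
    exact T_ge g z hz u hu
  · -- ‖G - f‖ ≤ ‖g - f‖
    set c : X →L[ℝ] ℝ := g - f with hc
    have key : ∀ a : X, 0 ≤ a → |G a - f a| ≤ T c a := by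
      intro a ha
      rw [hGposval a ha, abs_le]
      constructor
      · have h1 : T c a ≥ c (-a) := T_ge c a ha (-a) (by rw [abs_neg, abs_of_nonneg ha])
        have h2 : c (-a) = -(g a) + f a := by
          simp [hc, ContinuousLinearMap.sub_apply]
        have h3 : g a ≤ T g a := T_ge g a ha a (by rw [abs_of_nonneg ha])
        linarith
      · rw [sub_le_iff_le_add]
        refine csSup_le (hne g a ha) ?_
        rintro r ⟨u, hu, rfl⟩
        have h1 : f u ≤ f a := by
          have : 0 ≤ a - u := sub_nonneg.2 ((le_abs_self u).trans hu)
          have := hfpos _ this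
          rw [map_sub] at this
          linarith
        have h2 : c u ≤ T c a := T_ge c a ha u hu
        have h3 : c u = g u - f u := by simp [hc, ContinuousLinearMap.sub_apply]
        linarith
    refine ContinuousLinearMap.opNorm_le_bound _ (norm_nonneg c) fun v => ?_
    have h1 : (G - f) v = (G v⁺ - f v⁺) - (G v⁻ - f v⁻) := by
      have hGv : G v⁺ - G v⁻ = G v := by rw [← map_sub, posPart_sub_negPart]
      have hfv : f v⁺ - f v⁻ = f v := by rw [← map_sub, posPart_sub_negPart]
      rw [ContinuousLinearMap.sub_apply, ← hGv, ← hfv]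
      ring
    have h2 := key v⁺ (posPart_nonneg v)
    have h3 := key v⁻ (negPart_nonneg v)
    have h4 : T c v⁺ + T c v⁻ = T c |v| := by
      rw [← T_add c _ _ (posPart_nonneg v) (negPart_nonneg v), posPart_add_negPart]
    have h5 : T c |v| ≤ ‖c‖ * ‖v‖ := by
      have := T_le c |v| (abs_nonneg v)
      rwa [norm_abs_eq_norm] at this
    rw [Real.norm_eq_abs, h1]
    have := abs_sub (G v⁺ - f v⁺) (G v⁻ - f v⁻)
    calc |(G v⁺ - f v⁺) - (G v⁻ - f v⁻)| ≤ |G v⁺ - f v⁺| + |G v⁻ - f v⁻| := abs_sub _ _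
      _ ≤ T c v⁺ + T c v⁻ := add_le_add h2 h3
      _ ≤ ‖c‖ * ‖v‖ := by rw [h4]; exact h5

end Modulus

/-- Bishop–Phelps–Bollobás theorem for positive elements and positive
functionals in a Banach lattice. -/
theorem stmt1 (X : Type*) [NormedAddCommGroup X] [Lattice X] [HasSolidNorm X]
    [IsOrderedAddMonoid X] [NormedSpace ℝ X]
    [PosSMulStrictMono ℝ X] [CompleteSpace X]
    (ε : ℝ) (hε0 : 0 < ε) (hε1 : ε < 1)
    (x : X) (hx0 : 0 ≤ x) (hx : ‖x‖ = 1)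
    (f : X →L[ℝ] ℝ) (hfpos : ∀ z : X, 0 ≤ z → 0 ≤ f z) (hf : ‖f‖ = 1)
    (hfx : 1 - ε ^ 2 / 2 < f x) :
    ∃ (y : X) (g : X →L[ℝ] ℝ), 0 ≤ y ∧ ‖y‖ = 1 ∧
      (∀ z : X, 0 ≤ z → 0 ≤ g z) ∧ ‖g‖ = 1 ∧
      g y = 1 ∧ ‖y - x‖ < ε ∧ ‖g - f‖ < ε := by
  have hfb : ∀ z : X, f z ≤ ‖z‖ := by
    intro z
    have h1 := f.le_opNorm z
    rw [hf, one_mul] at h1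
    exact (le_abs_self _).trans (by simpa [Real.norm_eq_abs] using h1)
  have hδ0 : 0 ≤ 1 - f x := by
    have := hfb x; rw [hx] at this; linarith
  set δ : ℝ := 1 - f x with hδ
  have hδlt : δ < ε ^ 2 / 2 := by simp only [hδ]; linarith
  set lam : ℝ := (2 * δ / ε + ε) / 2 with hlam
  have h2δε : 2 * δ / ε < ε := by rw [div_lt_iff₀ hε0]; nlinarith
  have hδε_nonneg : 0 ≤ 2 * δ / ε := by positivity
  have hlam_pos : 0 < lam := by simp only [hlam]; linarith
  have hlam_lt : lam < ε := by simp only [hlam]; linarith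
  have hlam_gt : 2 * δ / ε < lam := by simp only [hlam]; linarith
  set h : X → ℝ := fun z => ‖z‖ - f z with hh
  have hcont : Continuous h := continuous_norm.sub f.continuous
  have hnn : ∀ z, 0 ≤ h z := fun z => by
    have := hfb z; simp only [hh]; linarith
  obtain ⟨y, hy1, hy2, hy3⟩ := my_ekeland h hcont hnn x lam hlam_pos
  have hhx : h x = δ := by simp only [hh, hx, hδ]
  have hdist : lam * dist x y ≤ δ := by
    have h1 := hnn y
    rw [hhx] at hy2
    linarith
  have hdist2 : dist x y < ε / 2 := by
    have h1 : 2 * δ < lam * ε := by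
      have := (div_lt_iff₀ hε0).1 hlam_gt
      linarith
    nlinarith [dist_nonneg (x := x) (y := y)]
  have hynorm : 1 - ε / 2 < ‖y‖ := by
    have h1 : ‖x‖ - ‖y‖ ≤ ‖x - y‖ := norm_sub_norm_le _ _
    rw [hx] at h1
    rw [dist_eq_norm] at hdist2
    linarith
  have hypos : 0 < ‖y‖ := by linarith
  have hy0 : y ≠ 0 := fun hcon => by rw [hcon, norm_zero] at hypos; exact lt_irrefl 0 hypos
  have key : ∀ z, ‖y‖ - f y ≤ ‖z‖ - f z + lam * ‖z - y‖ := by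
    intro z
    have := hy3 z
    simpa [hh, dist_eq_norm] using this
  obtain ⟨g, hg1, hg2, hg3⟩ := my_hb f hfb y hy0 lam hlam_pos key
  have hgnorm : ‖g‖ ≤ 1 := by
    refine g.opNorm_le_bound zero_le_one fun z => ?_
    rw [Real.norm_eq_abs, one_mul]
    exact hg1 z
  have hgf : ‖g - f‖ ≤ lam := by
    refine (g - f).opNorm_le_bound hlam_pos.le fun z => ?_
    rw [ContinuousLinearMap.sub_apply, Real.norm_eq_abs]
    exact hg3 z
  obtain ⟨G, hGpos, hGle, hGge, hGf⟩ := my_modulus g f hfpos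
  set u : X := ‖y‖⁻¹ • |y| with hu
  have hu0 : 0 ≤ u := smul_nonneg (inv_nonneg.2 (norm_nonneg y)) (abs_nonneg y)
  have hunorm : ‖u‖ = 1 := by
    rw [hu, norm_smul, norm_abs_eq_norm, Real.norm_eq_abs,
      abs_of_nonneg (inv_nonneg.2 (norm_nonneg y)), inv_mul_cancel₀ (ne_of_gt hypos)]
  have hGy : G |y| = ‖y‖ := by
    refine le_antisymm ?_ ?_
    · have h1 : ‖G |y|‖ ≤ ‖G‖ * ‖|y|‖ := G.le_opNorm _
      rw [norm_abs_eq_norm] at h1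
      have h2 : ‖G‖ * ‖y‖ ≤ 1 * ‖y‖ := by
        have := hGle.trans hgnorm
        nlinarith [norm_nonneg y]
      rw [Real.norm_eq_abs] at h1
      have h3 : G |y| ≤ |G (|y|)| := le_abs_self _
      linarith
    · have := hGge |y| (abs_nonneg y) y le_rfl
      rw [hg2] at this
      exact this
  have hGu : G u = 1 := by
    rw [hu, map_smul, smul_eq_mul, hGy, inv_mul_cancel₀ (ne_of_gt hypos)]
  have hGnorm : ‖G‖ = 1 := by
    refine le_antisymm (hGle.trans hgnorm) ?_
    have h1 : ‖G u‖ ≤ ‖G‖ * ‖u‖ := G.le_opNorm u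
    rw [hGu, hunorm, mul_one] at h1
    simpa using h1
  have hGfe : ‖G - f‖ < ε := lt_of_le_of_lt (hGf.trans hgf) hlam_lt
  have hdisty : ‖u - x‖ < ε := by
    have h1 : ‖u - x‖ ≤ ‖u - |y|‖ + ‖|y| - x‖ := by
      have := norm_add_le (u - |y|) (|y| - x)
      simpa using this
    have h2 : ‖|y| - x‖ ≤ ‖y - x‖ := by
      have := norm_abs_sub_abs y x
      rwa [abs_of_nonneg hx0] at this
    have h3 : ‖u - |y|‖ = |1 - ‖y‖| := by
      have e : u - |y| = (‖y‖⁻¹ - 1) • |y| := by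
        rw [hu, sub_smul, one_smul]
      rw [e, norm_smul, norm_abs_eq_norm, Real.norm_eq_abs]
      have e2 : ‖y‖⁻¹ - 1 = (1 - ‖y‖) / ‖y‖ := by field_simp
      rw [e2, abs_div, abs_of_pos hypos, div_mul_cancel₀ _ (ne_of_gt hypos)]
    have h4 : |1 - ‖y‖| ≤ ‖x - y‖ := by
      have := abs_norm_sub_norm_le x y
      rwa [hx] at this
    have h5 : ‖y - x‖ = ‖x - y‖ := norm_sub_rev _ _
    rw [dist_eq_norm] at hdist2
    calc ‖u - x‖ ≤ ‖u - |y|‖ + ‖|y| - x‖ := h1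
      _ ≤ |1 - ‖y‖| + ‖y - x‖ := by rw [h3]; linarith
      _ ≤ ‖x - y‖ + ‖x - y‖ := by rw [h5]; linarith
      _ < ε := by linarith
  exact ⟨u, G, hu0, hunorm, hGpos, hGnorm, hGu, hdisty, hGfe⟩
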